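/- With h̄ = h ∘ (D(m)S), σ_j > 0, and σ̃ the weight vector assigning weight m_jσ_j to every copy in Y_j^{I(j)}, the proximity operator of h̄* in the weighted norm satisfies, for every 𝒚 ∈ 𝒀: prox_{σ̃, h̄*}(𝒚) is the consensus element whose j-th block equals prox_{σ,h*}^{(j)}(S(𝒚)) replicated over I(j). That is, prox_{σ̃,h̄*}(𝒚)^{(j)}(i) = prox_{σ,h*}(S𝒚)^{(j)} for all j and all i ∈ I(j). -/

import Mathlib

/-- Fenchel conjugate of an extended-real-valued function with respect to a given
real pairing: `F*(φ) = sup_y ⟨φ, y⟩ - F(y)`. -/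
noncomputable def conjP {E : Type*} (pair : E → E → ℝ) (F : E → EReal) (φ : E) : EReal :=
  ⨆ y, ((pair φ y : ℝ) : EReal) - F y

/-- (Lemma 5 of the paper, prox form.) With `h̄ = h ∘ (D(m)S)`, `σ_j > 0` and
`σ̃` the weight assigning `m_j σ_j` to every copy in `Y_j^{I(j)}`, the prox of `h̄*` in the
`σ̃⁻¹`-weighted norm at `𝒚` (characterized as the minimizer `𝒒`) is the consensus element
whose `j`-th block equals the `j`-th block of `prox_{σ,h*}(S𝒚)` (the minimizer `q`)
replicated over `I(j)`: `𝒒^{(j)}(i) = q^{(j)}` for all `j` and `i ∈ I(j)`. -/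
lemma exists_affine_minorant {E : Type*} [NormedAddCommGroup E] [NormedSpace ℝ E]
    (h : E → EReal) (hproper : ∃ y, h y ≠ ⊤) (hnebot : ∀ y, h y ≠ ⊥)
    (hconv : ∀ (y z : E) (t : ℝ), 0 ≤ t → t ≤ 1 →
      h (t • y + (1 - t) • z) ≤ ((t : ℝ) : EReal) * h y + (((1 - t : ℝ)) : EReal) * h z)
    (hlsc : LowerSemicontinuous h) :
    ∃ (g : E →L[ℝ] ℝ) (c : ℝ), ∀ y, ((g y + c : ℝ) : EReal) ≤ h y := by
  obtain ⟨y₀, hy₀⟩ := hproper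
  set r₀ : ℝ := (h y₀).toReal with hr₀
  have hy₀' : h y₀ = (r₀ : EReal) := (EReal.coe_toReal hy₀ (hnebot y₀)).symm
  set epi : Set (E × ℝ) := {z | h z.1 ≤ ((z.2 : ℝ) : EReal)} with hepi_def
  have hclosed : IsClosed epi := by
    have h1 : IsClosed {z : E × EReal | h z.1 ≤ z.2} :=
      lowerSemicontinuous_iff_isClosed_epigraph.1 hlsc
    have : epi = (fun z : E × ℝ => (z.1, (z.2 : EReal))) ⁻¹' {z : E × EReal | h z.1 ≤ z.2} := rfl
    rw [this]
    exact h1.preimage (continuous_fst.prodMk (continuous_coe_real_ereal.comp continuous_snd))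
  have hconvex : Convex ℝ epi := by
    rintro ⟨y, t⟩ hyt ⟨z, s⟩ hzs a b ha hb hab
    simp only [hepi_def, Set.mem_setOf_eq] at hyt hzs ⊢
    have hyne : h y ≠ ⊤ := ne_top_of_le_ne_top (EReal.coe_ne_top t) hyt
    have hzne : h z ≠ ⊤ := ne_top_of_le_ne_top (EReal.coe_ne_top s) hzs
    set ry : ℝ := (h y).toReal with hry
    set rz : ℝ := (h z).toReal with hrz
    have hy' : h y = (ry : EReal) := (EReal.coe_toReal hyne (hnebot y)).symm
    have hz' : h z = (rz : EReal) := (EReal.coe_toReal hzne (hnebot z)).symm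
    have hryt : ry ≤ t := by rw [hy'] at hyt; exact_mod_cast hyt
    have hrzs : rz ≤ s := by rw [hz'] at hzs; exact_mod_cast hzs
    have hb' : b = 1 - a := by linarith
    have := hconv y z a ha (by linarith)
    rw [hy', hz'] at this
    have h2 : ((a : ℝ) : EReal) * ((ry : ℝ) : EReal) + (((1 - a : ℝ)) : EReal) * ((rz : ℝ) : EReal)
        = ((a * ry + (1 - a) * rz : ℝ) : EReal) := by
      rw [← EReal.coe_mul, ← EReal.coe_mul, ← EReal.coe_add]
    rw [h2] at this
    have h3 : a * ry + (1 - a) * rz ≤ a * t + b * s := by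
      rw [hb']; apply add_le_add
      · exact mul_le_mul_of_nonneg_left hryt ha
      · exact mul_le_mul_of_nonneg_left hrzs (by linarith)
    calc h (a • y + b • z) = h (a • y + (1 - a) • z) := by rw [hb']
      _ ≤ ((a * ry + (1 - a) * rz : ℝ) : EReal) := this
      _ ≤ ((a * t + b * s : ℝ) : EReal) := by exact_mod_cast h3
  have hxnot : ((y₀, r₀ - 1) : E × ℝ) ∉ epi := by
    simp only [hepi_def, Set.mem_setOf_eq, hy₀', not_le]
    exact_mod_cast (by linarith : r₀ - 1 < r₀)
  obtain ⟨f, u, hfx, hsep⟩ := geometric_hahn_banach_point_closed hconvex hclosed hxnot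
  set a : ℝ := f (0, 1) with ha_def
  set g0 : E →L[ℝ] ℝ := f.comp (ContinuousLinearMap.inl ℝ E ℝ) with hg0_def
  have hf : ∀ (y : E) (t : ℝ), f (y, t) = g0 y + a * t := by
    intro y t
    have : ((y, t) : E × ℝ) = (y, 0) + t • ((0 : E), (1 : ℝ)) := by
      simp [Prod.ext_iff]
    rw [this, map_add, map_smul]
    simp [hg0_def, ha_def, smul_eq_mul, mul_comm]
  have hmem₀ : ((y₀, r₀) : E × ℝ) ∈ epi := by
    simp only [hepi_def, Set.mem_setOf_eq, hy₀', le_refl]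
  have hu₀ : u < g0 y₀ + a * r₀ := by have := hsep _ hmem₀; rwa [hf] at this
  have hfx' : g0 y₀ + a * (r₀ - 1) < u := by rwa [hf] at hfx
  have hapos : 0 < a := by nlinarith
  refine ⟨(-a⁻¹) • g0, u / a, fun y => ?_⟩
  rcases eq_or_ne (h y) ⊤ with hT | hT
  · rw [hT]; exact le_top
  · set s : ℝ := (h y).toReal with hs
    have hy' : h y = (s : EReal) := (EReal.coe_toReal hT (hnebot y)).symm
    have hmem : ((y, s) : E × ℝ) ∈ epi := by
      simp only [hepi_def, Set.mem_setOf_eq, hy', le_refl]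
    have h1 : u < g0 y + a * s := by have := hsep _ hmem; rwa [hf] at this
    rw [hy']
    have h2 : -a⁻¹ * g0 y + u / a ≤ s := by
      have h4 : (u - g0 y) / a ≤ s := by
        rw [div_le_iff₀ hapos]; nlinarith
      have h5 : -a⁻¹ * g0 y + u / a = (u - g0 y) / a := by field_simp; ring
      linarith
    exact_mod_cast (by simpa using h2 : ((-a⁻¹ • g0) y + u / a : ℝ) ≤ s)


set_option maxHeartbeats 1000000 in
theorem stmt8 {p : ℕ} (n : ℕ)
    (Ys : Fin p → Type)
    [∀ j, NormedAddCommGroup (Ys j)] [∀ j, InnerProductSpace ℝ (Ys j)]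
    [∀ j, FiniteDimensional ℝ (Ys j)]
    (I : Fin p → Finset (Fin n)) (hm : ∀ j, 1 ≤ (I j).card)
    (σ : Fin p → ℝ) (hσ : ∀ j, 0 < σ j)
    (h : (∀ j, Ys j) → EReal)
    -- h is proper:
    (hproper : ∃ y, h y ≠ ⊤) (hnebot : ∀ y, h y ≠ ⊥)
    -- h is convex:
    (hconv : ∀ (y z : ∀ j, Ys j) (t : ℝ), 0 ≤ t → t ≤ 1 →
      h (t • y + (1 - t) • z) ≤ ((t : ℝ) : EReal) * h y + (((1 - t : ℝ)) : EReal) * h z)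
    -- h is closed (lower semicontinuous):
    (hlsc : LowerSemicontinuous h)
    -- the pairings on Y and on 𝒀, and the function h̄ = h ∘ (D(m)S):
    (pairY : (∀ j, Ys j) → (∀ j, Ys j) → ℝ)
    (hpairY : ∀ y z, pairY y z = ∑ j, @inner ℝ _ _ (y j) (z j))
    (pairYY : (∀ j, {i // i ∈ I j} → Ys j) → (∀ j, {i // i ∈ I j} → Ys j) → ℝ)
    (hpairYY : ∀ u v, pairYY u v = ∑ j, ∑ i ∈ (I j).attach, @inner ℝ _ _ (u j i) (v j i))
    (hbar : (∀ j, {i // i ∈ I j} → Ys j) → EReal)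
    (hhbar : ∀ yy, hbar yy = h (fun j =>
      ((I j).card : ℝ) • (((I j).card : ℝ)⁻¹ • ∑ i ∈ (I j).attach, yy j i)))
    -- the point 𝒚 and its blockwise average S𝒚:
    (yy : ∀ j, {i // i ∈ I j} → Ys j) (Syy : ∀ j, Ys j)
    (hSyy : ∀ j, Syy j = ((I j).card : ℝ)⁻¹ • ∑ i ∈ (I j).attach, yy j i)
    -- 𝒒 = prox_{σ̃, h̄*}(𝒚):
    (qq : ∀ j, {i // i ∈ I j} → Ys j)
    (hqq : ∀ ww : ∀ j, {i // i ∈ I j} → Ys j,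
      conjP pairYY hbar qq
          + (((1/2) * ∑ j, ∑ i ∈ (I j).attach,
              (((I j).card : ℝ) * σ j)⁻¹ * ‖qq j i - yy j i‖^2 : ℝ) : EReal)
        ≤ conjP pairYY hbar ww
          + (((1/2) * ∑ j, ∑ i ∈ (I j).attach,
              (((I j).card : ℝ) * σ j)⁻¹ * ‖ww j i - yy j i‖^2 : ℝ) : EReal))
    -- q = prox_{σ, h*}(S𝒚):
    (q : ∀ j, Ys j)
    (hq : ∀ v : ∀ j, Ys j,
      conjP pairY h q + (((1/2) * ∑ j, (σ j)⁻¹ * ‖q j - Syy j‖^2 : ℝ) : EReal)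
        ≤ conjP pairY h v + (((1/2) * ∑ j, (σ j)⁻¹ * ‖v j - Syy j‖^2 : ℝ) : EReal)) :
    ∀ (j : Fin p) (i : {i // i ∈ I j}), qq j i = q j := by
  classical
  -- basic facts about the cardinalities
  have hm0 : ∀ j, (0:ℝ) < ((I j).card : ℝ) := fun j => by exact_mod_cast hm j
  have hmne : ∀ j, ((I j).card : ℝ) ≠ 0 := fun j => ne_of_gt (hm0 j)
  have hinh : ∀ j, Nonempty {i // i ∈ I j} := fun j => by
    obtain ⟨i, hi⟩ := Finset.card_pos.1 (hm j); exact ⟨⟨i, hi⟩⟩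
  -- the sum map and the consensus embedding
  set Sm : (∀ j, {i // i ∈ I j} → Ys j) → (∀ j, Ys j) :=
    fun u j => ∑ i ∈ (I j).attach, u j i with hSm_def
  set Dm : (∀ j, Ys j) → (∀ j, {i // i ∈ I j} → Ys j) := fun v j _ => v j with hDm_def
  have hbar' : ∀ u, hbar u = h (Sm u) := by
    intro u; rw [hhbar]; congr 1; funext j; exact smul_inv_smul₀ (hmne j) _
  have hSm_surj : Function.Surjective Sm := by
    intro s
    refine ⟨fun j _ => (((I j).card : ℝ))⁻¹ • s j, ?_⟩
    funext j
    simp only [hSm_def, Finset.sum_const, Finset.card_attach]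
    rw [← Nat.cast_smul_eq_nsmul ℝ]
    exact smul_inv_smul₀ (hmne j) _
  have hpair_comp : ∀ v u, pairYY (Dm v) u = pairY v (Sm u) := by
    intro v u; rw [hpairYY, hpairY]
    exact Finset.sum_congr rfl fun j _ => (inner_sum _ _ _).symm
  have hA : ∀ v, conjP pairYY hbar (Dm v) = conjP pairY h v := by
    intro v; unfold conjP
    rw [← hSm_surj.iSup_comp (g := fun s => ((pairY v s : ℝ) : EReal) - h s)]
    exact iSup_congr fun u => by rw [hpair_comp, hbar']
  -- proper point of h
  obtain ⟨y₀, hy₀⟩ := hproper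
  set r₀ : ℝ := (h y₀).toReal with hr₀
  have hy₀' : h y₀ = (r₀ : EReal) := (EReal.coe_toReal hy₀ (hnebot y₀)).symm
  -- conjP on Y is never ⊥
  have hbotY : ∀ ψ : ∀ j, Ys j, ((pairY ψ y₀ - r₀ : ℝ) : EReal) ≤ conjP pairY h ψ := by
    intro ψ
    have h1 := le_iSup (fun y => ((pairY ψ y : ℝ) : EReal) - h y) y₀
    rw [hy₀'] at h1
    rwa [EReal.coe_sub]
  have hnbY : ∀ ψ, conjP pairY h ψ ≠ ⊥ :=
    fun ψ => ((EReal.bot_lt_coe _).trans_le (hbotY ψ)).ne'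
  -- affine minorant of h, and the corresponding point φ with finite conjugate
  obtain ⟨g, c, hgc⟩ := exists_affine_minorant h ⟨y₀, hy₀⟩ hnebot hconv hlsc
  set φ : ∀ j, Ys j := fun j => (InnerProductSpace.toDual ℝ (Ys j)).symm
    (LinearMap.toContinuousLinearMap ((g.toLinearMap).comp (LinearMap.single ℝ Ys j))) with hφ_def
  have hφ : ∀ y, pairY φ y = g y := by
    intro y; rw [hpairY]
    have h1 : ∀ j, (@inner ℝ _ _ (φ j) (y j) : ℝ) = g (Pi.single j (y j)) := by
      intro j
      rw [hφ_def, InnerProductSpace.toDual_symm_apply]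
      simp [LinearMap.single_apply]
    calc ∑ j, (@inner ℝ _ _ (φ j) (y j) : ℝ) = ∑ j, g (Pi.single j (y j)) :=
          Finset.sum_congr rfl fun j _ => h1 j
      _ = g (∑ j, Pi.single j (y j)) := (map_sum g _ _).symm
      _ = g y := by rw [Finset.univ_sum_single]
  have hφtop : conjP pairY h φ ≤ ((-c : ℝ) : EReal) := by
    refine iSup_le fun y => ?_
    rcases eq_or_ne (h y) ⊤ with hT | hT
    · rw [hT]
      have hbot : ((pairY φ y : ℝ) : EReal) - ⊤ = ⊥ := by
        simp [sub_eq_add_neg]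
      rw [hbot]; exact bot_le
    · have hy' : h y = (((h y).toReal : ℝ) : EReal) := (EReal.coe_toReal hT (hnebot y)).symm
      have h2 : g y + c ≤ (h y).toReal := by
        have := hgc y; rw [hy'] at this; exact_mod_cast this
      rw [hy', ← EReal.coe_sub]
      exact_mod_cast (by rw [hφ]; linarith : pairY φ y - (h y).toReal ≤ -c)
  -- conjP at q is finite
  have hqtop : conjP pairY h q ≠ ⊤ := by
    intro hT
    have h2 := hq φ
    rw [hT, EReal.top_add_coe] at h2
    have h3 : conjP pairY h φ
        + (((1/2) * ∑ j, (σ j)⁻¹ * ‖φ j - Syy j‖^2 : ℝ) : EReal)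
        ≤ ((-c + (1/2) * ∑ j, (σ j)⁻¹ * ‖φ j - Syy j‖^2 : ℝ) : EReal) := by
      rw [EReal.coe_add]; exact add_le_add_left hφtop _
    exact EReal.coe_ne_top _ (top_le_iff.1 (h2.trans h3))
  -- the quadratic identity relating the two weighted squared norms
  set K : ℝ := (1/2) * ∑ j, (((I j).card : ℝ) * σ j)⁻¹
      * ((∑ i ∈ (I j).attach, ‖yy j i‖^2) - ((I j).card : ℝ) * ‖Syy j‖^2) with hK_def
  have hsumyy : ∀ j, ∑ i ∈ (I j).attach, yy j i = ((I j).card : ℝ) • Syy j := by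
    intro j; rw [hSyy]; exact (smul_inv_smul₀ (hmne j) _).symm
  have hj' : ∀ j (v : Ys j), ∑ i ∈ (I j).attach, ‖v - yy j i‖^2
      = ((I j).card : ℝ) * ‖v - Syy j‖^2
        + ((∑ i ∈ (I j).attach, ‖yy j i‖^2) - ((I j).card : ℝ) * ‖Syy j‖^2) := by
    intro j v
    have e3 : ∑ i ∈ (I j).attach, (@inner ℝ _ _ v (yy j i) : ℝ)
        = ((I j).card : ℝ) * (@inner ℝ _ _ v (Syy j) : ℝ) := by
      rw [← inner_sum, hsumyy, real_inner_smul_right]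
    have e2 : ‖v - Syy j‖^2 = ‖v‖^2 - 2*(@inner ℝ _ _ v (Syy j) : ℝ) + ‖Syy j‖^2 :=
      norm_sub_sq_real _ _
    calc ∑ i ∈ (I j).attach, ‖v - yy j i‖^2
        = ∑ i ∈ (I j).attach, (‖v‖^2 - 2*(@inner ℝ _ _ v (yy j i) : ℝ) + ‖yy j i‖^2) :=
          Finset.sum_congr rfl fun i _ => norm_sub_sq_real _ _
      _ = ((I j).card : ℝ) * ‖v - Syy j‖^2
            + ((∑ i ∈ (I j).attach, ‖yy j i‖^2) - ((I j).card : ℝ) * ‖Syy j‖^2) := by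
          rw [Finset.sum_add_distrib, Finset.sum_sub_distrib, Finset.sum_const,
            Finset.card_attach, ← Finset.mul_sum, e3, e2, nsmul_eq_mul]
          ring
  have hquad : ∀ v : ∀ j, Ys j,
      (1/2) * ∑ j, ∑ i ∈ (I j).attach, (((I j).card : ℝ) * σ j)⁻¹ * ‖v j - yy j i‖^2
        = ((1/2) * ∑ j, (σ j)⁻¹ * ‖v j - Syy j‖^2) + K := by
    intro v
    have hterm : ∀ j, ∑ i ∈ (I j).attach, (((I j).card : ℝ) * σ j)⁻¹ * ‖v j - yy j i‖^2
        = (σ j)⁻¹ * ‖v j - Syy j‖^2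
          + (((I j).card : ℝ) * σ j)⁻¹
            * ((∑ i ∈ (I j).attach, ‖yy j i‖^2) - ((I j).card : ℝ) * ‖Syy j‖^2) := by
      intro j
      rw [← Finset.mul_sum, hj' j (v j), mul_add, mul_inv]
      congr 1
      rw [← mul_assoc]
      congr 1
      rw [mul_comm (((I j).card : ℝ))⁻¹ (σ j)⁻¹, mul_assoc,
        inv_mul_cancel₀ (hmne j), mul_one]
    calc (1/2) * ∑ j, ∑ i ∈ (I j).attach, (((I j).card : ℝ) * σ j)⁻¹ * ‖v j - yy j i‖^2
        = (1/2) * ∑ j, ((σ j)⁻¹ * ‖v j - Syy j‖^2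
            + (((I j).card : ℝ) * σ j)⁻¹
              * ((∑ i ∈ (I j).attach, ‖yy j i‖^2) - ((I j).card : ℝ) * ‖Syy j‖^2)) := by
          rw [Finset.sum_congr rfl fun j _ => hterm j]
      _ = ((1/2) * ∑ j, (σ j)⁻¹ * ‖v j - Syy j‖^2) + K := by
          rw [Finset.sum_add_distrib, mul_add, hK_def]
  -- q minimizes the K-shifted objective
  have hqmin : ∀ v, conjP pairY h q
      + (((1/2) * ∑ j, (σ j)⁻¹ * ‖q j - Syy j‖^2 + K : ℝ) : EReal)
      ≤ conjP pairY h v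
      + (((1/2) * ∑ j, (σ j)⁻¹ * ‖v j - Syy j‖^2 + K : ℝ) : EReal) := by
    intro v
    have h2 := add_le_add_left (hq v) ((K : ℝ) : EReal)
    rwa [add_assoc, add_assoc, ← EReal.coe_add, ← EReal.coe_add] at h2
  -- the blocks of qq are constant (consensus)
  have hcons : ∀ (j : Fin p) (i1 i2 : {i // i ∈ I j}), qq j i1 = qq j i2 := by
    by_contra hcon
    push_neg at hcon
    obtain ⟨j₀, i₁, i₂, hne12⟩ := hcon
    set w : Ys j₀ := qq j₀ i₁ - qq j₀ i₂ with hw_def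
    have hw0 : w ≠ 0 := sub_ne_zero.2 hne12
    have hw2 : (0:ℝ) < ‖w‖^2 := by
      have := norm_pos_iff.2 hw0
      positivity
    set b : {i // i ∈ I j₀} → Ys j₀ :=
      fun i => (if i = i₁ then w else 0) - (if i = i₂ then w else 0) with hb_def
    set e : ∀ j, {i // i ∈ I j} → Ys j :=
      Function.update (fun j (_ : {i // i ∈ I j}) => (0 : Ys j)) j₀ b with he_def
    have he_j₀ : e j₀ = b := Function.update_self _ _ _
    have he_ne : ∀ j, j ≠ j₀ → e j = fun _ => 0 := fun j hj => Function.update_of_ne hj _ _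
    have hSme : ∀ j, ∑ i ∈ (I j).attach, e j i = 0 := by
      intro j
      rcases eq_or_ne j j₀ with rfl | hj
      · simp only [he_j₀, hb_def]
        rw [Finset.sum_sub_distrib,
          Finset.sum_ite_eq' (I j).attach i₁ (fun _ => w),
          Finset.sum_ite_eq' (I j).attach i₂ (fun _ => w)]
        simp [Finset.mem_attach]
      · simp [he_ne j hj]
    set u₀ : ∀ j, {i // i ∈ I j} → Ys j :=
      fun j _ => (((I j).card : ℝ))⁻¹ • y₀ j with hu₀_def
    have hSmu : ∀ t : ℝ, Sm (u₀ + t • e) = y₀ := by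
      intro t; funext j
      simp only [hSm_def, Pi.add_apply, Pi.smul_apply]
      rw [Finset.sum_add_distrib]
      have h1 : ∑ i ∈ (I j).attach, t • e j i = 0 := by
        rw [← Finset.smul_sum, hSme, smul_zero]
      rw [h1, add_zero]
      simp only [hu₀_def, Finset.sum_const, Finset.card_attach]
      rw [← Nat.cast_smul_eq_nsmul ℝ]
      exact smul_inv_smul₀ (hmne j) _
    have hpe : pairYY qq e = ‖w‖^2 := by
      rw [hpairYY]
      rw [Finset.sum_eq_single j₀]
      · have hterm : ∀ i : {i // i ∈ I j₀}, (@inner ℝ _ _ (qq j₀ i) (e j₀ i) : ℝ)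
            = (if i = i₁ then (@inner ℝ _ _ (qq j₀ i) w : ℝ) else 0)
              - (if i = i₂ then (@inner ℝ _ _ (qq j₀ i) w : ℝ) else 0) := by
          intro i
          simp only [he_j₀, hb_def]
          rw [inner_sub_right]
          congr 1 <;> split_ifs <;> simp [inner_zero_right]
        rw [Finset.sum_congr rfl fun i _ => hterm i]
        rw [Finset.sum_sub_distrib,
          Finset.sum_ite_eq' (I j₀).attach i₁ (fun i => (@inner ℝ _ _ (qq j₀ i) w : ℝ)),
          Finset.sum_ite_eq' (I j₀).attach i₂ (fun i => (@inner ℝ _ _ (qq j₀ i) w : ℝ))]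
        simp only [Finset.mem_attach, if_true]
        rw [← inner_sub_left, ← hw_def, real_inner_self_eq_norm_sq]
      · intro j _ hj
        simp [he_ne j hj]
      · intro hj; exact absurd (Finset.mem_univ j₀) hj
    have hlin : ∀ t : ℝ, pairYY qq (u₀ + t • e) = pairYY qq u₀ + t * ‖w‖^2 := by
      intro t
      have h1 : pairYY qq (u₀ + t • e) = pairYY qq u₀ + t * pairYY qq e := by
        simp only [hpairYY, Pi.add_apply, Pi.smul_apply, inner_add_right,
          real_inner_smul_right, Finset.sum_add_distrib, Finset.mul_sum]
      rw [h1, hpe]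
    have htop : conjP pairYY hbar qq = ⊤ := by
      rw [EReal.eq_top_iff_forall_lt]
      intro r
      set t : ℝ := (r + 1 - (pairYY qq u₀ - r₀)) / ‖w‖^2 with ht_def
      have hval : ((pairYY qq (u₀ + t • e) : ℝ) : EReal) - hbar (u₀ + t • e)
          = ((r + 1 : ℝ) : EReal) := by
        rw [hbar', hSmu t, hy₀', ← EReal.coe_sub]
        have : pairYY qq (u₀ + t • e) - r₀ = r + 1 := by
          rw [hlin, ht_def, div_mul_cancel₀ _ (ne_of_gt hw2)]; ring
        rw [this]
      calc ((r : ℝ) : EReal) < ((r + 1 : ℝ) : EReal) := by exact_mod_cast lt_add_one r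
        _ = ((pairYY qq (u₀ + t • e) : ℝ) : EReal) - hbar (u₀ + t • e) := hval.symm
        _ ≤ conjP pairYY hbar qq :=
            le_iSup (fun u => ((pairYY qq u : ℝ) : EReal) - hbar u) _
    have h2 := hqq (Dm q)
    rw [htop, EReal.top_add_coe, hA q] at h2
    have hcq : conjP pairY h q = (((conjP pairY h q).toReal : ℝ) : EReal) :=
      (EReal.coe_toReal hqtop (hnbY q)).symm
    rw [hcq, ← EReal.coe_add] at h2
    exact EReal.coe_ne_top _ (top_le_iff.1 h2)
  -- the common value of the blocks of qq
  set cc : ∀ j, Ys j := fun j => qq j (Classical.arbitrary _) with hcc_def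
  have hqqD : qq = Dm cc := by
    funext j i; exact hcons j i (Classical.arbitrary _)
  -- cc minimizes the K-shifted objective on Y
  have hcmin : ∀ v, conjP pairY h cc
      + (((1/2) * ∑ j, (σ j)⁻¹ * ‖cc j - Syy j‖^2 + K : ℝ) : EReal)
      ≤ conjP pairY h v
      + (((1/2) * ∑ j, (σ j)⁻¹ * ‖v j - Syy j‖^2 + K : ℝ) : EReal) := by
    intro v
    have h2 := hqq (Dm v)
    rw [hqqD] at h2
    rw [hA, hA] at h2
    simp only [hDm_def] at h2
    rwa [hquad cc, hquad v] at h2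
  -- conjP at cc is finite
  have hctop : conjP pairY h cc ≠ ⊤ := by
    intro hT
    have h2 := hcmin φ
    rw [hT, EReal.top_add_coe] at h2
    have h3 : conjP pairY h φ
        + (((1/2) * ∑ j, (σ j)⁻¹ * ‖φ j - Syy j‖^2 + K : ℝ) : EReal)
        ≤ ((-c + ((1/2) * ∑ j, (σ j)⁻¹ * ‖φ j - Syy j‖^2 + K) : ℝ) : EReal) := by
      rw [EReal.coe_add (-c)]; exact add_le_add_left hφtop _
    exact EReal.coe_ne_top _ (top_le_iff.1 (h2.trans h3))
  -- real values of the two conjugates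
  set a1 : ℝ := (conjP pairY h q).toReal with ha1_def
  set a2 : ℝ := (conjP pairY h cc).toReal with ha2_def
  have ha1 : conjP pairY h q = (a1 : EReal) := (EReal.coe_toReal hqtop (hnbY q)).symm
  have ha2 : conjP pairY h cc = (a2 : EReal) := (EReal.coe_toReal hctop (hnbY cc)).symm
  -- the midpoint
  set mid : ∀ j, Ys j := fun j => (1/2 : ℝ) • (q j + cc j) with hmid_def
  have hpairlin : ∀ y, pairY mid y = (1/2) * (pairY q y + pairY cc y) := by
    intro y
    simp only [hpairY, hmid_def]
    rw [← Finset.sum_add_distrib, Finset.mul_sum]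
    refine Finset.sum_congr rfl fun j _ => ?_
    rw [real_inner_smul_left, inner_add_left]
  have hmidconj : conjP pairY h mid ≤ (((a1 + a2) / 2 : ℝ) : EReal) := by
    refine iSup_le fun y => ?_
    rcases eq_or_ne (h y) ⊤ with hT | hT
    · rw [hT]
      have hbot : ((pairY mid y : ℝ) : EReal) - ⊤ = ⊥ := by simp [sub_eq_add_neg]
      rw [hbot]; exact bot_le
    · have hy' : h y = (((h y).toReal : ℝ) : EReal) := (EReal.coe_toReal hT (hnebot y)).symm
      have hq_y : pairY q y - (h y).toReal ≤ a1 := by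
        have h1 : ((pairY q y : ℝ) : EReal) - h y ≤ conjP pairY h q :=
          le_iSup (fun z => ((pairY q z : ℝ) : EReal) - h z) y
        rw [hy', ← EReal.coe_sub, ha1] at h1
        exact_mod_cast h1
      have hc_y : pairY cc y - (h y).toReal ≤ a2 := by
        have h1 : ((pairY cc y : ℝ) : EReal) - h y ≤ conjP pairY h cc :=
          le_iSup (fun z => ((pairY cc z : ℝ) : EReal) - h z) y
        rw [hy', ← EReal.coe_sub, ha2] at h1
        exact_mod_cast h1
      rw [hy', ← EReal.coe_sub]
      exact_mod_cast (by rw [hpairlin]; linarith :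
        pairY mid y - (h y).toReal ≤ (a1 + a2) / 2)
  -- the two minimality inequalities, in real form
  have hr1 : a1 + ((1/2) * ∑ j, (σ j)⁻¹ * ‖q j - Syy j‖^2 + K)
      ≤ (a1 + a2) / 2 + ((1/2) * ∑ j, (σ j)⁻¹ * ‖mid j - Syy j‖^2 + K) := by
    have h2 := hqmin mid
    rw [ha1] at h2
    have h3 : conjP pairY h mid
        + (((1/2) * ∑ j, (σ j)⁻¹ * ‖mid j - Syy j‖^2 + K : ℝ) : EReal)
        ≤ (((a1 + a2) / 2 + ((1/2) * ∑ j, (σ j)⁻¹ * ‖mid j - Syy j‖^2 + K) : ℝ) : EReal) := by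
      rw [EReal.coe_add ((a1 + a2) / 2)]; exact add_le_add_left hmidconj _
    have h4 := h2.trans h3
    rw [← EReal.coe_add] at h4
    exact_mod_cast h4
  have hr2 : a2 + ((1/2) * ∑ j, (σ j)⁻¹ * ‖cc j - Syy j‖^2 + K)
      ≤ (a1 + a2) / 2 + ((1/2) * ∑ j, (σ j)⁻¹ * ‖mid j - Syy j‖^2 + K) := by
    have h2 := hcmin mid
    rw [ha2] at h2
    have h3 : conjP pairY h mid
        + (((1/2) * ∑ j, (σ j)⁻¹ * ‖mid j - Syy j‖^2 + K : ℝ) : EReal)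
        ≤ (((a1 + a2) / 2 + ((1/2) * ∑ j, (σ j)⁻¹ * ‖mid j - Syy j‖^2 + K) : ℝ) : EReal) := by
      rw [EReal.coe_add ((a1 + a2) / 2)]; exact add_le_add_left hmidconj _
    have h4 := h2.trans h3
    rw [← EReal.coe_add] at h4
    exact_mod_cast h4
  -- parallelogram identity per block
  have hpar : ∀ j, ‖mid j - Syy j‖^2
      = (1/2) * ‖q j - Syy j‖^2 + (1/2) * ‖cc j - Syy j‖^2 - (1/4) * ‖q j - cc j‖^2 := by
    intro j
    have h1 : mid j - Syy j = (1/2 : ℝ) • ((q j - Syy j) + (cc j - Syy j)) := by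
      simp only [hmid_def]; module
    have h2 : q j - cc j = (q j - Syy j) - (cc j - Syy j) := by module
    have hplaw := parallelogram_law_with_norm ℝ (q j - Syy j) (cc j - Syy j)
    rw [h1, h2, norm_smul]
    have h3 : ‖(1/2 : ℝ)‖ = 1/2 := by norm_num [Real.norm_eq_abs]
    rw [h3]
    have e1 : ∀ v : Ys j, ‖v‖^2 = ‖v‖ * ‖v‖ := fun v => pow_two _
    rw [mul_pow, e1, e1, e1, e1]
    linarith [hplaw]
  -- summing up: the distance between q and cc vanishes
  have hsum_mid : ∑ j, (σ j)⁻¹ * ‖mid j - Syy j‖^2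
      = (1/2) * ∑ j, (σ j)⁻¹ * ‖q j - Syy j‖^2
        + (1/2) * ∑ j, (σ j)⁻¹ * ‖cc j - Syy j‖^2
        - (1/4) * ∑ j, (σ j)⁻¹ * ‖q j - cc j‖^2 := by
    rw [Finset.mul_sum, Finset.mul_sum, Finset.mul_sum, ← Finset.sum_add_distrib,
      ← Finset.sum_sub_distrib]
    refine Finset.sum_congr rfl fun j _ => ?_
    rw [hpar j]; ring
  have hD0 : ∑ j, (σ j)⁻¹ * ‖q j - cc j‖^2 ≤ 0 := by linarith
  have hDnn : ∀ j ∈ Finset.univ, (0:ℝ) ≤ (σ j)⁻¹ * ‖q j - cc j‖^2 := by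
    intro j _
    have := (hσ j).le
    positivity
  have hDeq : ∑ j, (σ j)⁻¹ * ‖q j - cc j‖^2 = 0 :=
    le_antisymm hD0 (Finset.sum_nonneg hDnn)
  have hjeq : ∀ j, q j = cc j := by
    intro j
    have h1 := (Finset.sum_eq_zero_iff_of_nonneg hDnn).1 hDeq j (Finset.mem_univ j)
    have h2 : ‖q j - cc j‖^2 = 0 := by
      rcases mul_eq_zero.1 h1 with h3 | h3
      · exact absurd h3 (inv_ne_zero (ne_of_gt (hσ j)))
      · exact h3
    have h4 : q j - cc j = 0 := by
      rwa [pow_eq_zero_iff (by norm_num : (2:ℕ) ≠ 0), norm_eq_zero] at h2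
    exact sub_eq_zero.1 h4
  intro j i
  calc qq j i = cc j := by rw [hqqD]
    _ = q j := (hjeq j).symm
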